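/- For every Ĵ ∈ [0,∞) and every site i ∈ ℤ/Nℤ, the susceptibility of the 1D Ising model satisfies ∑_{j∈ℤ/Nℤ} E_{μ_N}[σ_i·σ_j] ≤ e^{2Ĵ}. -/

import Mathlib

open Real Finset

noncomputable section

/-- Spin value of a Boolean: `true ↦ +1`, `false ↦ -1`. -/
def spin (b : Bool) : ℝ := if b then 1 else -1

/-- Configurations of the 1D Ising model on the cycle `ZMod N`. -/
abbrev Config (N : ℕ) := ZMod N → Bool

/-- Flip the spins of `σ` at all sites of `A`. -/
def flipSpins {N : ℕ} (A : Finset (ZMod N)) (σ : Config N) : Config N :=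
  fun i => if i ∈ A then !(σ i) else σ i

/-- `A` is a (nonempty) arc `{a, a+1, …, a+k}` of the cycle. -/
def IsArc {N : ℕ} (A : Finset (ZMod N)) : Prop :=
  ∃ (a : ZMod N) (k : ℕ),
    A = Finset.image (fun t : ℕ => a + (t : ZMod N)) (Finset.range (k + 1))

/-- `σ` is constant on `A`. -/
def ConstOn {N : ℕ} (σ : Config N) (A : Finset (ZMod N)) : Prop :=
  ∀ i ∈ A, ∀ j ∈ A, σ i = σ j

/-- The set of sites where two configurations differ. -/
def diffSet {N : ℕ} [NeZero N] (σ η : Config N) : Finset (ZMod N) :=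
  Finset.univ.filter fun i => σ i ≠ η i

/-- The edge boundary of `A`: edges `(i, i+1)` with exactly one endpoint in `A`. -/
def edgeBoundary {N : ℕ} [NeZero N] (A : Finset (ZMod N)) : Finset (ZMod N) :=
  Finset.univ.filter fun i => ¬ ((i ∈ A) ↔ (i + 1 ∈ A))

/-- Edges `(i, i+1)` on which the spins of `σ` agree (i.e. `σ_i · σ_{i+1} = +1`). -/
def Bplus {N : ℕ} [NeZero N] (σ : Config N) : Finset (ZMod N) :=
  Finset.univ.filter fun i => σ i = σ (i + 1)

open scoped Classical in
/-- Transition matrix of the Wolff dynamics for the 1D Ising model, with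
`κ = 1 - e^{-2Ĵ}` and `κ̂ = e^{-2Ĵ}`. -/
noncomputable def PW (N : ℕ) [NeZero N] (J : ℝ) (σ η : Config N) : ℝ :=
  if IsArc (diffSet σ η) ∧ ConstOn σ (diffSet σ η) then
    if diffSet σ η = Finset.univ then
      ((N : ℝ) * exp (-2 * J) + (1 - exp (-2 * J))) * (1 - exp (-2 * J)) ^ (N - 1)
    else
      ((diffSet σ η).card : ℝ) / N * (1 - exp (-2 * J)) ^ ((diffSet σ η).card - 1) *
        exp (-2 * J) ^ ((edgeBoundary (diffSet σ η) ∩ Bplus σ).card)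
  else 0

/-- Energy functional `∑ i, σ_i σ_{i+1}` of a configuration. -/
noncomputable def energy (N : ℕ) [NeZero N] (σ : Config N) : ℝ :=
  ∑ i : ZMod N, spin (σ i) * spin (σ (i + 1))

/-- The Gibbs measure of the 1D Ising model with periodic boundary conditions. -/
noncomputable def gibbs (N : ℕ) [NeZero N] (J : ℝ) (σ : Config N) : ℝ :=
  exp (J * energy N σ) / ∑ η : Config N, exp (J * energy N η)

/-- Expectation with respect to the Gibbs measure. -/
noncomputable def Emu (N : ℕ) [NeZero N] (J : ℝ) (f : Config N → ℝ) : ℝ :=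
  ∑ σ : Config N, f σ * gibbs N J σ

/-- Dirichlet form of a transition matrix `P` with respect to a measure `μ`. -/
noncomputable def dirichlet (N : ℕ) [NeZero N] (P : Config N → Config N → ℝ)
    (μ : Config N → ℝ) (f : Config N → ℝ) : ℝ :=
  (1/2) * ∑ σ : Config N, ∑ η : Config N, (f σ - f η)^2 * P η σ * μ η

section SuscAux
set_option linter.unusedSectionVars false

lemma spin_sq (b : Bool) : spin b * spin b = 1 := by cases b <;> simp [spin]

lemma spin_cases (b : Bool) : spin b = 1 ∨ spin b = -1 := by cases b <;> simp [spin]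

variable {N : ℕ} [NeZero N]

/-- Character of a subset of sites. -/
def chi (A : Finset (ZMod N)) (σ : Config N) : ℝ := ∏ k ∈ A, spin (σ k)

lemma chi_orth (A : Finset (ZMod N)) :
    ∑ σ : Config N, chi A σ = if A = ∅ then (2:ℝ)^N else 0 := by
  classical
  have h1 : ∀ σ : Config N, chi A σ = ∏ k : ZMod N, (if k ∈ A then spin (σ k) else 1) := by
    intro σ
    rw [chi]; rw [Finset.prod_ite_mem, Finset.univ_inter]
  simp_rw [h1]
  have h2 : ∑ σ : Config N, ∏ k : ZMod N, (if k ∈ A then spin (σ k) else 1)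
      = ∏ k : ZMod N, ∑ b : Bool, (if k ∈ A then spin b else 1) := by
    rw [Finset.prod_univ_sum (fun _ => (Finset.univ : Finset Bool))
      (fun k b => if k ∈ A then spin b else 1), Fintype.piFinset_univ]
  rw [h2]
  have h3 : ∀ k : ZMod N, (∑ b : Bool, (if k ∈ A then spin b else 1)) = if k ∈ A then 0 else 2 := by
    intro k
    by_cases hk : k ∈ A <;> simp [hk, spin]
  simp_rw [h3]
  by_cases hA : A = ∅
  · simp [hA, Finset.card_univ, ZMod.card]
  · obtain ⟨a, ha⟩ := Finset.nonempty_iff_ne_empty.2 hA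
    rw [if_neg hA]
    exact Finset.prod_eq_zero (Finset.mem_univ a) (by simp [ha])

lemma chi_mul (A B : Finset (ZMod N)) (σ : Config N) :
    chi A σ * chi B σ = chi (symmDiff A B) σ := by
  classical
  have hA : chi A σ = chi (A \ B) σ * chi (A ∩ B) σ := by
    rw [chi, chi, chi, ← Finset.prod_union (Finset.disjoint_sdiff_inter A B),
      Finset.sdiff_union_inter]
  have hB : chi B σ = chi (B \ A) σ * chi (B ∩ A) σ := by
    rw [chi, chi, chi, ← Finset.prod_union (Finset.disjoint_sdiff_inter B A),
      Finset.sdiff_union_inter]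
  have hcomm : chi (B ∩ A) σ = chi (A ∩ B) σ := by rw [Finset.inter_comm]
  have hsq : chi (A ∩ B) σ * chi (A ∩ B) σ = 1 := by
    rw [chi, ← Finset.prod_mul_distrib]
    exact Finset.prod_eq_one fun k _ => spin_sq _
  have hsd : chi (symmDiff A B) σ = chi (A \ B) σ * chi (B \ A) σ := by
    rw [symmDiff_def, Finset.sup_eq_union, chi, chi, chi,
      Finset.prod_union (disjoint_sdiff_sdiff)]
  rw [hA, hB, hcomm, hsd]
  have h : (chi (A \ B) σ * chi (A ∩ B) σ) * (chi (B \ A) σ * chi (A ∩ B) σ)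
      = (chi (A \ B) σ * chi (B \ A) σ) * (chi (A ∩ B) σ * chi (A ∩ B) σ) := by ring
  rw [h, hsq, mul_one]

set_option linter.unusedSectionVars false

/-- Spin product along edge `(k, k+1)`. -/
def edg (k : ZMod N) (σ : Config N) : ℝ := spin (σ k) * spin (σ (k + 1))

/-- Product of edge spins over a set of edges. -/
def W (U : Finset (ZMod N)) (σ : Config N) : ℝ := ∏ k ∈ U, edg k σ

lemma edg_cases (k : ZMod N) (σ : Config N) : edg k σ = 1 ∨ edg k σ = -1 := by
  unfold edg
  rcases spin_cases (σ k) with h1 | h1 <;> rcases spin_cases (σ (k+1)) with h2 | h2 <;>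
    rw [h1, h2] <;> norm_num

lemma W_eq_chi (U : Finset (ZMod N)) (σ : Config N) :
    W U σ = chi (symmDiff U (U.image (· + 1))) σ := by
  classical
  rw [← chi_mul, W, chi, chi]
  rw [Finset.prod_image (by intro a _ b _ h; exact add_left_injective 1 h)]
  rw [← Finset.prod_mul_distrib]
  rfl

lemma shift_eq_self {U : Finset (ZMod N)} (h : U.image (· + 1) = U) :
    U = ∅ ∨ U = Finset.univ := by
  classical
  by_cases hU : U = ∅
  · exact Or.inl hU
  · right
    obtain ⟨u, hu⟩ := Finset.nonempty_iff_ne_empty.2 hU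
    have key : ∀ n : ℕ, u + (n : ZMod N) ∈ U := by
      intro n
      induction n with
      | zero => simpa using hu
      | succ m ih =>
        have : (u + (m : ZMod N)) + 1 ∈ U.image (· + 1) :=
          Finset.mem_image_of_mem _ ih
        rw [h] at this
        push_cast
        rw [← add_assoc]
        exact this
    apply Finset.eq_univ_of_forall
    intro k
    have : u + ((k - u).val : ZMod N) ∈ U := key (k - u).val
    rwa [ZMod.natCast_rightInverse (k - u), add_sub_cancel] at this

lemma image_shift_univ : (Finset.univ : Finset (ZMod N)).image (· + 1) = Finset.univ := by
  apply Finset.eq_univ_of_forall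
  intro k
  exact Finset.mem_image.2 ⟨k - 1, Finset.mem_univ _, by ring⟩

lemma W_orth (U : Finset (ZMod N)) :
    ∑ σ : Config N, W U σ = if U = ∅ ∨ U = Finset.univ then (2:ℝ)^N else 0 := by
  classical
  simp_rw [W_eq_chi]
  rw [chi_orth]
  congr 1
  simp only [eq_iff_iff]
  rw [← Finset.bot_eq_empty, symmDiff_eq_bot]
  constructor
  · intro h
    exact shift_eq_self h.symm
  · rintro (rfl | rfl)
    · simp
    · exact (image_shift_univ).symm

/-- The arc of `d` consecutive edges starting at `i`. -/
def arc (i : ZMod N) (d : ℕ) : Finset (ZMod N) := (Finset.range d).image (fun m : ℕ => i + m)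

lemma arc_card (i : ZMod N) {d : ℕ} (hd : d ≤ N) : (arc i d).card = d := by
  rw [arc, Finset.card_image_of_injOn, Finset.card_range]
  intro a ha b hb h
  simp only [Finset.coe_range, Set.mem_Iio] at ha hb
  have h' : ((a : ZMod N)) = (b : ZMod N) := by
    have := add_left_cancel h
    exact this
  have : (a : ZMod N).val = (b : ZMod N).val := by rw [h']
  rwa [ZMod.val_cast_of_lt (lt_of_lt_of_le ha hd),
    ZMod.val_cast_of_lt (lt_of_lt_of_le hb hd)] at this

lemma arc_not_mem (i : ZMod N) {d : ℕ} (hd : d < N) : i + (d : ZMod N) ∉ arc i d := by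
  rw [arc]
  intro h
  obtain ⟨m, hm, hme⟩ := Finset.mem_image.1 h
  rw [Finset.mem_range] at hm
  have h' : ((m : ZMod N)) = (d : ZMod N) := add_left_cancel hme
  have : (m : ZMod N).val = (d : ZMod N).val := by rw [h']
  rw [ZMod.val_cast_of_lt (hm.trans hd), ZMod.val_cast_of_lt hd] at this
  omega

lemma arc_succ (i : ZMod N) (d : ℕ) :
    arc i (d + 1) = insert (i + (d : ZMod N)) (arc i d) := by
  rw [arc, Finset.range_add_one, Finset.image_insert, arc]

lemma telescope (σ : Config N) (i : ZMod N) :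
    ∀ d : ℕ, d ≤ N → spin (σ i) * spin (σ (i + (d : ZMod N))) = W (arc i d) σ := by
  intro d
  induction d with
  | zero => intro _; simp [arc, W, spin_sq]
  | succ m ih =>
    intro hm
    have hmN : m < N := by omega
    rw [arc_succ, W, Finset.prod_insert (arc_not_mem i hmN), ← W, ← ih (le_of_lt hmN), edg]
    have : (i + (m : ZMod N)) + 1 = i + ((m + 1 : ℕ) : ZMod N) := by push_cast; ring
    rw [this]
    have h2 : spin (σ (i + (m : ZMod N))) * spin (σ (i + ((m+1 : ℕ) : ZMod N)))
          * (spin (σ i) * spin (σ (i + (m : ZMod N))))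
        = (spin (σ i) * spin (σ (i + ((m+1 : ℕ) : ZMod N))))
          * (spin (σ (i + (m : ZMod N))) * spin (σ (i + (m : ZMod N)))) := by ring
    rw [h2, spin_sq, mul_one]

lemma exp_edge {J e : ℝ} (he : e = 1 ∨ e = -1) :
    Real.exp (J * e) = Real.cosh J * (1 + (Real.sinh J / Real.cosh J) * e) := by
  have hc := (Real.cosh_pos J).ne'
  rcases he with rfl | rfl
  · field_simp
    linarith [Real.cosh_add_sinh J]
  · field_simp
    nlinarith [Real.cosh_sub_sinh J, Real.cosh_pos J]

lemma mul_exp_edge {J e : ℝ} (he : e = 1 ∨ e = -1) :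
    e * Real.exp (J * e) = Real.cosh J * ((Real.sinh J / Real.cosh J) + e) := by
  have hc := (Real.cosh_pos J).ne'
  rcases he with rfl | rfl
  · field_simp
    linarith [Real.cosh_add_sinh J]
  · field_simp
    nlinarith [Real.cosh_sub_sinh J, Real.cosh_pos J]

lemma num_eq (J : ℝ) (i : ZMod N) {d : ℕ} (hd : d ≤ N) :
    ∑ σ : Config N, (spin (σ i) * spin (σ (i + (d : ZMod N)))) * Real.exp (J * energy N σ)
      = (Real.cosh J)^N * 2^N *
        ((Real.sinh J / Real.cosh J)^d + (Real.sinh J / Real.cosh J)^(N-d)) := by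
  classical
  set c := Real.cosh J with hc
  set t := Real.sinh J / Real.cosh J with ht
  set A := arc i d with hA
  have hcardA : A.card = d := arc_card i hd
  have hNcard : A.card + Aᶜ.card = N := by
    rw [Finset.card_add_card_compl, ZMod.card]
  have hcardAc : Aᶜ.card = N - d := by omega
  have key : ∀ σ : Config N,
      (spin (σ i) * spin (σ (i + (d : ZMod N)))) * Real.exp (J * energy N σ)
        = ∑ S ∈ A.powerset, ∑ T ∈ Aᶜ.powerset,
            c ^ N * t ^ ((A \ S).card + T.card) * W (S ∪ T) σ := by
    intro σ
    have e1 : Real.exp (J * energy N σ) = ∏ k : ZMod N, Real.exp (J * edg k σ) := by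
      rw [show energy N σ = ∑ k : ZMod N, edg k σ from rfl, Finset.mul_sum, Real.exp_sum]
    rw [telescope σ i d hd, e1]
    calc W A σ * ∏ k : ZMod N, Real.exp (J * edg k σ)
        = W A σ * ((∏ k ∈ A, Real.exp (J * edg k σ)) * ∏ k ∈ Aᶜ, Real.exp (J * edg k σ)) := by
          rw [Finset.prod_mul_prod_compl]
      _ = (∏ k ∈ A, edg k σ * Real.exp (J * edg k σ)) * ∏ k ∈ Aᶜ, Real.exp (J * edg k σ) := by
          rw [← mul_assoc, W, ← Finset.prod_mul_distrib]
      _ = (∏ k ∈ A, c * (edg k σ + t)) * ∏ k ∈ Aᶜ, c * (edg k σ * t + 1) := by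
          refine congrArg₂ (· * ·) (Finset.prod_congr rfl fun k _ => ?_)
            (Finset.prod_congr rfl fun k _ => ?_)
          · rw [mul_exp_edge (edg_cases k σ)]; ring
          · rw [exp_edge (edg_cases k σ)]; ring
      _ = (c ^ A.card * ∏ k ∈ A, (edg k σ + t)) *
            (c ^ Aᶜ.card * ∏ k ∈ Aᶜ, (edg k σ * t + 1)) := by
          rw [Finset.prod_mul_distrib, Finset.prod_mul_distrib, Finset.prod_const,
            Finset.prod_const]
      _ = c ^ N * ((∏ k ∈ A, (edg k σ + t)) * ∏ k ∈ Aᶜ, (edg k σ * t + 1)) := by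
          rw [show c ^ N = c ^ A.card * c ^ Aᶜ.card by rw [← pow_add, hNcard]]; ring
      _ = c ^ N * ((∑ S ∈ A.powerset, W S σ * t ^ (A \ S).card) *
            (∑ T ∈ Aᶜ.powerset, W T σ * t ^ T.card)) := by
          rw [Finset.prod_add (fun k => edg k σ) (fun _ => t) A,
            Finset.prod_add (fun k => edg k σ * t) (fun _ => (1:ℝ)) Aᶜ]
          congr 1
          congr 1
          · exact Finset.sum_congr rfl fun S _ => by rw [W, Finset.prod_const]
          · refine Finset.sum_congr rfl fun T _ => ?_
            rw [Finset.prod_const, Finset.prod_mul_distrib, Finset.prod_const, W, one_pow,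
              mul_one]
      _ = ∑ S ∈ A.powerset, ∑ T ∈ Aᶜ.powerset,
            c ^ N * t ^ ((A \ S).card + T.card) * W (S ∪ T) σ := by
          rw [Finset.sum_mul_sum, Finset.mul_sum]
          refine Finset.sum_congr rfl fun S hS => ?_
          rw [Finset.mul_sum]
          refine Finset.sum_congr rfl fun T hT => ?_
          have hdisj : Disjoint S T :=
            Finset.disjoint_of_subset_left (Finset.mem_powerset.1 hS)
              (Finset.disjoint_of_subset_right (Finset.mem_powerset.1 hT) disjoint_compl_right)
          have hW : W (S ∪ T) σ = W S σ * W T σ := by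
            rw [W, Finset.prod_union hdisj]; rfl
          rw [hW, pow_add]; ring
  simp_rw [key]
  rw [Finset.sum_comm]
  have swap2 : ∀ S ∈ A.powerset,
      (∑ σ : Config N, ∑ T ∈ Aᶜ.powerset, c ^ N * t ^ ((A \ S).card + T.card) * W (S ∪ T) σ)
        = ∑ T ∈ Aᶜ.powerset, c ^ N * t ^ ((A \ S).card + T.card) *
            (if S ∪ T = ∅ ∨ S ∪ T = Finset.univ then (2:ℝ)^N else 0) := by
    intro S _
    rw [Finset.sum_comm]
    exact Finset.sum_congr rfl fun T _ => by rw [← Finset.mul_sum, W_orth]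
  rw [Finset.sum_congr rfl swap2]
  have hune : (Finset.univ : Finset (ZMod N)).Nonempty := Finset.univ_nonempty
  have point : ∀ S ∈ A.powerset, ∀ T ∈ Aᶜ.powerset,
      c ^ N * t ^ ((A \ S).card + T.card) *
          (if S ∪ T = ∅ ∨ S ∪ T = Finset.univ then (2:ℝ)^N else 0)
        = (if S = ∅ ∧ T = ∅ then c ^ N * 2 ^ N * t ^ d else 0)
          + (if S = A ∧ T = Aᶜ then c ^ N * 2 ^ N * t ^ (N - d) else 0) := by
    intro S hS T hT
    have hSA := Finset.mem_powerset.1 hS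
    have hTA := Finset.mem_powerset.1 hT
    by_cases h1 : S = ∅ ∧ T = ∅
    · obtain ⟨rfl, rfl⟩ := h1
      have h2 : ¬((∅ : Finset (ZMod N)) = A ∧ (∅ : Finset (ZMod N)) = Aᶜ) := by
        rintro ⟨hA', hAc'⟩
        have hu : (Finset.univ : Finset (ZMod N)) = A ∪ Aᶜ := (Finset.union_compl A).symm
        rw [← hAc', ← hA', Finset.union_empty] at hu
        exact hune.ne_empty hu
      rw [if_pos (Or.inl (Finset.union_empty (∅ : Finset (ZMod N)))), if_pos ⟨rfl, rfl⟩,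
        if_neg h2, Finset.sdiff_empty, Finset.card_empty, add_zero, hcardA]
      ring
    · by_cases h2 : S = A ∧ T = Aᶜ
      · obtain ⟨rfl, rfl⟩ := h2
        rw [if_pos (Or.inr (Finset.union_compl A)), if_neg h1, if_pos ⟨rfl, rfl⟩,
          Finset.sdiff_self, Finset.card_empty, zero_add, hcardAc]
        ring
      · have h3 : ¬(S ∪ T = ∅ ∨ S ∪ T = Finset.univ) := by
          rintro (h | h)
          · exact h1 ⟨Finset.union_eq_empty.1 h |>.1, Finset.union_eq_empty.1 h |>.2⟩
          · apply h2
            have hSA' : S = A := by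
              apply Finset.Subset.antisymm hSA
              intro k hk
              have : k ∈ S ∪ T := h ▸ Finset.mem_univ k
              rcases Finset.mem_union.1 this with hks | hkt
              · exact hks
              · exact absurd hk (Finset.mem_compl.1 (hTA hkt))
            have hTA' : T = Aᶜ := by
              apply Finset.Subset.antisymm hTA
              intro k hk
              have : k ∈ S ∪ T := h ▸ Finset.mem_univ k
              rcases Finset.mem_union.1 this with hks | hkt
              · exact absurd (hSA hks) (Finset.mem_compl.1 hk)
              · exact hkt
            exact ⟨hSA', hTA'⟩
        rw [if_neg h3, if_neg h1, if_neg h2, mul_zero, add_zero]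
  rw [Finset.sum_congr rfl fun S hS => Finset.sum_congr rfl fun T hT => point S hS T hT]
  rw [Finset.sum_congr rfl fun S _ => Finset.sum_add_distrib]
  rw [Finset.sum_add_distrib]
  have inner1 : ∀ S : Finset (ZMod N),
      (∑ T ∈ Aᶜ.powerset, if S = ∅ ∧ T = ∅ then c ^ N * 2 ^ N * t ^ d else 0)
        = if S = ∅ then c ^ N * 2 ^ N * t ^ d else 0 := by
    intro S
    by_cases hS : S = ∅
    · subst hS
      simp only [eq_self_iff_true, true_and, if_true]
      rw [Finset.sum_ite_eq' Aᶜ.powerset (∅ : Finset (ZMod N))]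
      rw [if_pos (Finset.mem_powerset.2 (Finset.empty_subset _))]
    · simp [hS]
  have inner2 : ∀ S : Finset (ZMod N),
      (∑ T ∈ Aᶜ.powerset, if S = A ∧ T = Aᶜ then c ^ N * 2 ^ N * t ^ (N - d) else 0)
        = if S = A then c ^ N * 2 ^ N * t ^ (N - d) else 0 := by
    intro S
    by_cases hS : S = A
    · subst hS
      simp only [eq_self_iff_true, true_and, if_true]
      rw [Finset.sum_ite_eq' Aᶜ.powerset (Aᶜ : Finset (ZMod N))]
      rw [if_pos (Finset.mem_powerset.2 (le_refl _))]
    · simp [hS]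
  rw [Finset.sum_congr rfl fun S _ => inner1 S, Finset.sum_congr rfl fun S _ => inner2 S]
  rw [Finset.sum_ite_eq' A.powerset (∅ : Finset (ZMod N)),
    Finset.sum_ite_eq' A.powerset A]
  rw [if_pos (Finset.mem_powerset.2 (Finset.empty_subset _)),
    if_pos (Finset.mem_powerset.2 (le_refl _))]
  ring

end SuscAux

/-- **Susceptibility bound for the 1D Ising model**: for every `Ĵ ∈ [0,∞)` and
every site `i`, `∑_j E_{μ_N}[σ_i σ_j] ≤ e^{2Ĵ}`. -/
theorem susceptibility_le (N : ℕ) (hN : 3 ≤ N) [NeZero N]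
    (J : ℝ) (hJ : 0 ≤ J) (i : ZMod N) :
    ∑ j : ZMod N, Emu N J (fun σ => spin (σ i) * spin (σ j)) ≤ exp (2 * J) := by
  classical
  set c := Real.cosh J with hcdef
  set t := Real.sinh J / Real.cosh J with ht
  have hc : 0 < c := Real.cosh_pos J
  have hs : 0 ≤ Real.sinh J := by
    rw [Real.sinh_eq]
    have := Real.exp_le_exp.2 (neg_le_self hJ)
    linarith
  have ht0 : 0 ≤ t := div_nonneg hs hc.le
  have ht1 : t < 1 := by
    rw [ht, div_lt_one hc]
    have h2 := Real.cosh_sub_sinh J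
    have h3 := Real.exp_pos (-J)
    linarith
  -- partition function
  have hZ : (∑ η : Config N, Real.exp (J * energy N η)) = c ^ N * 2 ^ N * (1 + t ^ N) := by
    have h0 := num_eq (N := N) J i (d := 0) (Nat.zero_le N)
    simp only [Nat.cast_zero, add_zero, pow_zero, Nat.sub_zero] at h0
    rw [← h0]
    exact Finset.sum_congr rfl fun σ _ => by rw [spin_sq, one_mul]
  -- each summand
  have hEmu : ∀ j : ZMod N, Emu N J (fun σ => spin (σ i) * spin (σ j))
      = (t ^ ((j - i).val) + t ^ (N - (j - i).val)) / (1 + t ^ N) := by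
    intro j
    have hj : i + (((j - i).val : ℕ) : ZMod N) = j := by
      rw [ZMod.natCast_rightInverse (j - i)]
      exact add_sub_cancel i j
    have hnum := num_eq (N := N) J i (d := (j - i).val) (ZMod.val_lt (j - i)).le
    rw [hj] at hnum
    have e1 : Emu N J (fun σ => spin (σ i) * spin (σ j))
        = (∑ σ : Config N, (spin (σ i) * spin (σ j)) * Real.exp (J * energy N σ)) /
            (∑ η : Config N, Real.exp (J * energy N η)) := by
      rw [Emu]
      have hpt : ∀ σ : Config N, spin (σ i) * spin (σ j) * gibbs N J σ
          = (spin (σ i) * spin (σ j) * Real.exp (J * energy N σ)) /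
              (∑ η : Config N, Real.exp (J * energy N η)) := fun σ => by
        rw [gibbs, mul_div_assoc]
      rw [Finset.sum_congr rfl fun σ _ => hpt σ, ← Finset.sum_div]
    rw [e1, hnum, hZ, mul_div_mul_left _ _ (by positivity : (c:ℝ) ^ N * 2 ^ N ≠ 0)]
  simp_rw [hEmu]
  -- reindex the sum
  have hsum : ∑ j : ZMod N, (t ^ ((j - i).val) + t ^ (N - (j - i).val))
      = ∑ m ∈ Finset.range N, (t ^ m + t ^ (N - m)) := by
    have h1 : ∑ j : ZMod N, (t ^ ((j - i).val) + t ^ (N - (j - i).val))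
        = ∑ k : ZMod N, (t ^ k.val + t ^ (N - k.val)) :=
      Fintype.sum_equiv (Equiv.subRight i) _ _ (fun j => rfl)
    rw [h1]
    exact Finset.sum_nbij' (fun k : ZMod N => k.val) (fun m : ℕ => (m : ZMod N))
      (fun k _ => Finset.mem_range.2 (ZMod.val_lt k)) (fun m _ => Finset.mem_univ _)
      (fun k _ => ZMod.natCast_rightInverse k)
      (fun m hm => ZMod.val_cast_of_lt (Finset.mem_range.1 hm))
      (fun k _ => rfl)
  rw [← Finset.sum_div, hsum]
  -- geometric sums
  set G := ∑ m ∈ Finset.range N, t ^ m with hGdef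
  have hG : (1 - t) * G = 1 - t ^ N := by
    have h := geom_sum_mul t N
    rw [hGdef]
    linarith [h]
  have hrefl : ∑ m ∈ Finset.range N, t ^ (N - m) = t * G := by
    rw [← Finset.sum_range_reflect (fun m => t ^ (N - m)) N, hGdef, Finset.mul_sum]
    refine Finset.sum_congr rfl fun m hm => ?_
    have hmN : m < N := Finset.mem_range.1 hm
    have h1 : N - (N - 1 - m) = m + 1 := by omega
    rw [h1, pow_succ]
    ring
  rw [Finset.sum_add_distrib, hrefl]
  -- exp(2J) in terms of t
  have hexp : Real.exp (2 * J) * (1 - t) = 1 + t := by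
    have h3 : Real.exp (2 * J) * Real.exp (-J) = Real.exp J := by
      rw [← Real.exp_add]; ring_nf
    have h4 : Real.exp (2 * J) * (Real.cosh J - Real.sinh J)
        = Real.cosh J + Real.sinh J := by
      rw [Real.cosh_sub_sinh, Real.cosh_add_sinh]; exact h3
    have hcne : Real.cosh J ≠ 0 := (Real.cosh_pos J).ne'
    rw [ht]
    field_simp
    linear_combination h4
  have h1t : 0 < 1 - t := by linarith
  have htN : (0:ℝ) ≤ t ^ N := pow_nonneg ht0 N
  rw [div_le_iff₀ (by positivity : (0:ℝ) < 1 + t ^ N)]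
  refine le_of_mul_le_mul_left ?_ h1t
  calc (1 - t) * (G + t * G) = (1 + t) * ((1 - t) * G) := by ring
    _ = (1 + t) * (1 - t ^ N) := by rw [hG]
    _ ≤ (1 + t) * (1 + t ^ N) := by nlinarith
    _ = (1 - t) * (Real.exp (2 * J) * (1 + t ^ N)) := by linear_combination (-(1 + t ^ N)) * hexp
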